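/- For any positive integers n_1, n_2, the 2-dimensional grid graph G_{n_1,n_2} is a star-2-PCG. -/

import Mathlib

/-- The 2-dimensional grid graph on `Fin n₁ × Fin n₂`: two vertices are adjacent
iff they differ by exactly 1 in exactly one coordinate. -/
def gridGraph (n₁ n₂ : ℕ) : SimpleGraph (Fin n₁ × Fin n₂) where
  Adj u v := |(u.1 : ℤ) - v.1| + |(u.2 : ℤ) - v.2| = 1
  symm := ⟨by intro u v h; simpa [abs_sub_comm] using h⟩
  loopless := ⟨by intro u h; simp at h⟩

/-- A graph is a star-2-PCG if there are nonnegative vertex weights and two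
disjoint intervals of nonnegative reals such that two distinct vertices are
adjacent iff the sum of their weights lies in the union of the intervals. -/
def IsStar2PCG {V : Type*} (G : SimpleGraph V) : Prop :=
  ∃ (w : V → ℝ) (I₁ I₂ : Set ℝ),
    (∀ v, 0 ≤ w v) ∧ I₁.OrdConnected ∧ I₂.OrdConnected ∧
    I₁ ⊆ Set.Ici 0 ∧ I₂ ⊆ Set.Ici 0 ∧ Disjoint I₁ I₂ ∧
    (∀ a b : V, a ≠ b → (G.Adj a b ↔ w a + w b ∈ I₁ ∪ I₂))

/-- Key arithmetic equivalence for the star-2-PCG construction on grids. -/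
lemma star2pcg_key (N x y : ℤ) (hN : 2 ≤ N)
    (hb1 : -(N-2) ≤ x + y) (hb2 : x + y ≤ N - 2)
    (hb3 : -(N-2) ≤ x - y) (hb4 : x - y ≤ N - 2)
    (hpar : (x + y) % 2 = 1) :
    (|x| + |y| = 1) ↔
      ((-N-1 ≤ N*(x+y) + (x-y) ∧ N*(x+y) + (x-y) ≤ -N+1) ∨
       (N-1 ≤ N*(x+y) + (x-y) ∧ N*(x+y) + (x-y) ≤ N+1)) := by
  constructor
  · intro h
    have hcases : (x = 1 ∧ y = 0) ∨ (x = -1 ∧ y = 0) ∨ (x = 0 ∧ y = 1) ∨ (x = 0 ∧ y = -1) := by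
      rcases abs_cases x with ⟨h1,h2⟩|⟨h1,h2⟩ <;> rcases abs_cases y with ⟨h3,h4⟩|⟨h3,h4⟩ <;>
        omega
    rcases hcases with ⟨hx,hy⟩|⟨hx,hy⟩|⟨hx,hy⟩|⟨hx,hy⟩ <;> subst hx <;> subst hy
    · right; constructor <;> nlinarith
    · left; constructor <;> nlinarith
    · right; constructor <;> nlinarith
    · left; constructor <;> nlinarith
  · intro h
    have hL : x + y = 1 ∨ x + y = -1 := by
      by_contra hc
      push_neg at hc
      have h3 : 3 ≤ x + y ∨ x + y ≤ -3 := by omega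
      rcases h3 with h3|h3
      · have hNL : (3:ℤ)*N ≤ N*(x+y) := by nlinarith
        rcases h with ⟨h1,h2⟩|⟨h1,h2⟩ <;> linarith
      · have hNL : N*(x+y) ≤ (-3:ℤ)*N := by nlinarith
        rcases h with ⟨h1,h2⟩|⟨h1,h2⟩ <;> linarith
    rcases hL with hL|hL
    · have hval : N*(x+y) + (x - y) = N + (x - y) := by rw [hL]; ring
      rw [hval] at h
      rcases h with ⟨h1,h2⟩|⟨h1,h2⟩
      · exfalso; linarith
      · have : (x = 1 ∧ y = 0) ∨ (x = 0 ∧ y = 1) := by omega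
        rcases this with ⟨hx,hy⟩|⟨hx,hy⟩ <;> subst hx <;> subst hy <;> norm_num
    · have hval : N*(x+y) + (x - y) = -N + (x - y) := by rw [hL]; ring
      rw [hval] at h
      rcases h with ⟨h1,h2⟩|⟨h1,h2⟩
      · have : (x = -1 ∧ y = 0) ∨ (x = 0 ∧ y = -1) := by omega
        rcases this with ⟨hx,hy⟩|⟨hx,hy⟩ <;> subst hx <;> subst hy <;> norm_num
      · exfalso; linarith

theorem stmt11 (n₁ n₂ : ℕ) (hn₁ : 1 ≤ n₁) (hn₂ : 1 ≤ n₂) :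
    IsStar2PCG (gridGraph n₁ n₂) := by
  set N : ℤ := (n₁ : ℤ) + (n₂ : ℤ) with hNdef
  have hN2 : 2 ≤ N := by omega
  set c : ℤ := N*N + N + 10 with hcdef
  set U : ℤ → ℤ → ℤ := fun i j => 2*N + 10 + N*(i+j) + (i - j) with hUdef
  set Wt : Fin n₁ × Fin n₂ → ℤ := fun v =>
    if (v.1.val + v.2.val) % 2 = 0 then c + U v.1.val v.2.val
    else c - U v.1.val v.2.val with hWtdef
  -- bounds on U
  have hUbounds : ∀ v : Fin n₁ × Fin n₂,
      N + 10 ≤ U v.1.val v.2.val ∧ U v.1.val v.2.val ≤ c := by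
    intro v
    have hi1 : (0:ℤ) ≤ v.1.val := Int.natCast_nonneg _
    have hi2 : (v.1.val : ℤ) ≤ n₁ - 1 := by
      have := v.1.isLt; omega
    have hj1 : (0:ℤ) ≤ v.2.val := Int.natCast_nonneg _
    have hj2 : (v.2.val : ℤ) ≤ n₂ - 1 := by
      have := v.2.isLt; omega
    have hN0 : (0:ℤ) ≤ N := by linarith
    constructor
    · have h1 : (0:ℤ) ≤ N * ((v.1.val:ℤ) + v.2.val) := mul_nonneg hN0 (by linarith)
      simp only [hUdef]
      have : (v.1.val : ℤ) - v.2.val ≥ -(N-1) := by omega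
      linarith
    · have h1 : N * ((v.1.val:ℤ) + v.2.val) ≤ N * (N - 2) :=
        mul_le_mul_of_nonneg_left (by omega) hN0
      have h2 : N * (N-2) = N*N - 2*N := by ring
      simp only [hUdef, hcdef]
      have : (v.1.val : ℤ) - v.2.val ≤ N - 2 := by omega
      linarith
  refine ⟨fun v => ((Wt v : ℤ) : ℝ),
    Set.Icc ((2*c - N - 1 : ℤ) : ℝ) ((2*c - N + 1 : ℤ) : ℝ),
    Set.Icc ((2*c + N - 1 : ℤ) : ℝ) ((2*c + N + 1 : ℤ) : ℝ),
    ?_, Set.ordConnected_Icc, Set.ordConnected_Icc, ?_, ?_, ?_, ?_⟩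
  · -- nonneg weights
    intro v
    have hb := hUbounds v
    have : (0:ℤ) ≤ Wt v := by
      simp only [hWtdef]
      split_ifs <;> linarith
    show (0:ℝ) ≤ ((Wt v : ℤ) : ℝ)
    exact_mod_cast this
  · -- I₁ ⊆ Ici 0
    intro x hx
    simp only [Set.mem_Ici]
    have h0 : (0:ℤ) ≤ 2*c - N - 1 := by nlinarith
    have h0' : (0:ℝ) ≤ ((2*c - N - 1 : ℤ) : ℝ) := by exact_mod_cast h0
    exact le_trans h0' hx.1
  · -- I₂ ⊆ Ici 0
    intro x hx
    simp only [Set.mem_Ici]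
    have h0 : (0:ℤ) ≤ 2*c + N - 1 := by nlinarith
    have h0' : (0:ℝ) ≤ ((2*c + N - 1 : ℤ) : ℝ) := by exact_mod_cast h0
    exact le_trans h0' hx.1
  · -- disjoint
    rw [Set.disjoint_left]
    intro x hx1 hx2
    have h1 : x ≤ ((2*c - N + 1 : ℤ) : ℝ) := hx1.2
    have h2 : ((2*c + N - 1 : ℤ) : ℝ) ≤ x := hx2.1
    have hlt : ((2*c - N + 1 : ℤ) : ℝ) < ((2*c + N - 1 : ℤ) : ℝ) := by
      have : (2*c - N + 1 : ℤ) < 2*c + N - 1 := by omega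
      exact_mod_cast this
    linarith
  · -- main equivalence
    intro a b hab
    have hWab : (fun v => ((Wt v : ℤ) : ℝ)) a + (fun v => ((Wt v : ℤ) : ℝ)) b
        = ((Wt a + Wt b : ℤ) : ℝ) := by push_cast; ring
    rw [Set.mem_union, Set.mem_Icc, Set.mem_Icc, hWab, Int.cast_le, Int.cast_le,
      Int.cast_le, Int.cast_le]
    show (|(a.1 : ℤ) - b.1| + |(a.2 : ℤ) - b.2| = 1) ↔ _
    -- bounds on coordinates
    have hia : (a.1.val : ℤ) ≤ n₁ - 1 := by have := a.1.isLt; omega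
    have hib : (b.1.val : ℤ) ≤ n₁ - 1 := by have := b.1.isLt; omega
    have hja : (a.2.val : ℤ) ≤ n₂ - 1 := by have := a.2.isLt; omega
    have hjb : (b.2.val : ℤ) ≤ n₂ - 1 := by have := b.2.isLt; omega
    have hUa := hUbounds a
    have hUb := hUbounds b
    rcases Nat.mod_two_eq_zero_or_one (a.1.val + a.2.val) with hpa|hpa <;>
      rcases Nat.mod_two_eq_zero_or_one (b.1.val + b.2.val) with hpb|hpb
    · -- both even: not adjacent, sum = 2c + (U_a + U_b) large
      have hWa : Wt a = c + U a.1.val a.2.val := by simp only [hWtdef]; rw [if_pos hpa]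
      have hWb : Wt b = c + U b.1.val b.2.val := by simp only [hWtdef]; rw [if_pos hpb]
      constructor
      · intro hadj
        exfalso
        rcases abs_cases ((a.1 : ℤ) - b.1) with ⟨h1,h2⟩|⟨h1,h2⟩ <;>
          rcases abs_cases ((a.2 : ℤ) - b.2) with ⟨h3,h4⟩|⟨h3,h4⟩ <;> omega
      · intro h
        exfalso
        rw [hWa, hWb] at h
        rcases h with ⟨h1,h2⟩|⟨h1,h2⟩ <;> linarith [hUa.1, hUb.1]
    · -- a even, b odd : sum = 2c + (U_a - U_b)
      have hWa : Wt a = c + U a.1.val a.2.val := by simp only [hWtdef]; rw [if_pos hpa]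
      have hWb : Wt b = c - U b.1.val b.2.val := by
        simp only [hWtdef]; rw [if_neg (by omega)]
      rw [hWa, hWb]
      have hdiff : c + U a.1.val a.2.val + (c - U b.1.val b.2.val)
          = 2*c + (N*(((a.1.val:ℤ) - b.1.val) + ((a.2.val:ℤ) - b.2.val))
            + (((a.1.val:ℤ) - b.1.val) - ((a.2.val:ℤ) - b.2.val))) := by
        simp only [hUdef]; ring
      rw [hdiff]
      have hkey := star2pcg_key N ((a.1.val:ℤ) - b.1.val) ((a.2.val:ℤ) - b.2.val) hN2
        (by omega) (by omega) (by omega) (by omega) (by omega)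
      rw [show ((a.1:ℤ) - b.1) = ((a.1.val:ℤ) - b.1.val) from rfl,
        show ((a.2:ℤ) - b.2) = ((a.2.val:ℤ) - b.2.val) from rfl]
      rw [hkey]
      constructor <;> rintro (⟨h1,h2⟩|⟨h1,h2⟩) <;> [left; right; left; right] <;>
        constructor <;> linarith
    · -- a odd, b even : sum = 2c + (U_b - U_a)
      have hWa : Wt a = c - U a.1.val a.2.val := by
        simp only [hWtdef]; rw [if_neg (by omega)]
      have hWb : Wt b = c + U b.1.val b.2.val := by simp only [hWtdef]; rw [if_pos hpb]
      rw [hWa, hWb]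
      have hdiff : c - U a.1.val a.2.val + (c + U b.1.val b.2.val)
          = 2*c + (N*(((b.1.val:ℤ) - a.1.val) + ((b.2.val:ℤ) - a.2.val))
            + (((b.1.val:ℤ) - a.1.val) - ((b.2.val:ℤ) - a.2.val))) := by
        simp only [hUdef]; ring
      rw [hdiff]
      have hkey := star2pcg_key N ((b.1.val:ℤ) - a.1.val) ((b.2.val:ℤ) - a.2.val) hN2
        (by omega) (by omega) (by omega) (by omega) (by omega)
      rw [show ((a.1:ℤ) - b.1) = ((a.1.val:ℤ) - b.1.val) from rfl,
        show ((a.2:ℤ) - b.2) = ((a.2.val:ℤ) - b.2.val) from rfl,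
        abs_sub_comm ((a.1.val:ℤ)) _, abs_sub_comm ((a.2.val:ℤ)) _]
      rw [hkey]
      constructor <;> rintro (⟨h1,h2⟩|⟨h1,h2⟩) <;> [left; right; left; right] <;>
        constructor <;> linarith
    · -- both odd
      have hWa : Wt a = c - U a.1.val a.2.val := by
        simp only [hWtdef]; rw [if_neg (by omega)]
      have hWb : Wt b = c - U b.1.val b.2.val := by
        simp only [hWtdef]; rw [if_neg (by omega)]
      constructor
      · intro hadj
        exfalso
        rcases abs_cases ((a.1 : ℤ) - b.1) with ⟨h1,h2⟩|⟨h1,h2⟩ <;>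
          rcases abs_cases ((a.2 : ℤ) - b.2) with ⟨h3,h4⟩|⟨h3,h4⟩ <;> omega
      · intro h
        exfalso
        rw [hWa, hWb] at h
        rcases h with ⟨h1,h2⟩|⟨h1,h2⟩ <;> linarith [hUa.1, hUb.1]
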